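/- In type B_n (n ≥ 2), the vectors w₁ = v₁⊗v₁, w₂ = v₁⊗v₂ − r² v₂⊗v₁, and w₃ = Σ_{i=1}^{n} r^{2(i−1)} v_i⊗v_{i'} + r^{2n−1}s^{−1} v_{n+1}⊗v_{n+1} + Σ_{i=1}^{n} r^{2n−1}s^{2(i−n)−1} v_{i'}⊗v_i are highest weight vectors: for every 1 ≤ i ≤ n, the operator Δe_i := e_i ⊗ Id + ω_i ⊗ e_i on V ⊗ V annihilates w₁, w₂, and w₃. -/

import Mathlib

open Finset Matrix Kronecker

namespace TwoParamQG

variable {K : Type*} [Field K]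

/-- The `N × N` matrix unit `E_{i j}` (with 1-based indices `i, j`). -/
def Eu (N i j : ℕ) : Matrix (Fin N) (Fin N) K :=
  Matrix.of fun a b => if ((a : ℕ) + 1 = i ∧ (b : ℕ) + 1 = j) then (1 : K) else 0

/-- Standard basis vector `v_i` of `K^N` (1-based index `i`). -/
def bv (N i : ℕ) : Fin N → K := fun a => if (a : ℕ) + 1 = i then (1 : K) else 0

/-- The tensor `v_i ⊗ v_j` in `K^N ⊗ K^N`. -/
def bvv (N i j : ℕ) : Fin N × Fin N → K := fun p => bv N i p.1 * bv N j p.2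

/-- `i ↦ i' = N + 1 - i` for `N = 2n + 1` (type `B_n`). -/
def pB (n i : ℕ) : ℕ := 2 * n + 2 - i

/-- Type `B_n` generator matrix `e_i` on `K^{2n+1}`. -/
def eB (n i : ℕ) : Matrix (Fin (2 * n + 1)) (Fin (2 * n + 1)) K :=
  Eu (2 * n + 1) i (i + 1) - Eu (2 * n + 1) (pB n (i + 1)) (pB n i)

/-- Type `B_n` generator matrix `f_i` on `K^{2n+1}`. -/
def fB (n : ℕ) (r s : K) (i : ℕ) : Matrix (Fin (2 * n + 1)) (Fin (2 * n + 1)) K :=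
  if i = n then
    (r⁻¹ + s⁻¹) • (Eu (2 * n + 1) (n + 1) n - Eu (2 * n + 1) (pB n n) (n + 1))
  else
    Eu (2 * n + 1) (i + 1) i - ((r * s) ^ (-2 : ℤ)) • Eu (2 * n + 1) (pB n i) (pB n (i + 1))

/-- Type `B_n` generator matrix `ω_i` on `K^{2n+1}`. -/
def ωB (n : ℕ) (r s : K) (i : ℕ) : Matrix (Fin (2 * n + 1)) (Fin (2 * n + 1)) K :=
  if i = n then
    (r * s⁻¹) • Eu (2 * n + 1) n n + Eu (2 * n + 1) (n + 1) (n + 1)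
      + (r⁻¹ * s) • Eu (2 * n + 1) (pB n n) (pB n n)
      + (∑ j ∈ Finset.Icc 1 (n - 1),
          ((r⁻¹ * s⁻¹) • Eu (2 * n + 1) j j + (r * s) • Eu (2 * n + 1) (pB n j) (pB n j)))
  else
    (r ^ 2) • Eu (2 * n + 1) i i + (s ^ 2) • Eu (2 * n + 1) (i + 1) (i + 1)
      + (r ^ (-2 : ℤ)) • Eu (2 * n + 1) (pB n i) (pB n i)
      + (s ^ (-2 : ℤ)) • Eu (2 * n + 1) (pB n (i + 1)) (pB n (i + 1))
      + (∑ j ∈ (Finset.Icc 1 n).filter (fun j => j ≠ i ∧ j ≠ i + 1),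
          (Eu (2 * n + 1) j j + Eu (2 * n + 1) (pB n j) (pB n j)))
      + Eu (2 * n + 1) (n + 1) (n + 1)

/-- Type `B_n` generator matrix `ω'_i` on `K^{2n+1}`. -/
def ω'B (n : ℕ) (r s : K) (i : ℕ) : Matrix (Fin (2 * n + 1)) (Fin (2 * n + 1)) K :=
  if i = n then
    (r⁻¹ * s) • Eu (2 * n + 1) n n + Eu (2 * n + 1) (n + 1) (n + 1)
      + (r * s⁻¹) • Eu (2 * n + 1) (pB n n) (pB n n)
      + (∑ j ∈ Finset.Icc 1 (n - 1),
          ((r⁻¹ * s⁻¹) • Eu (2 * n + 1) j j + (r * s) • Eu (2 * n + 1) (pB n j) (pB n j)))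
  else
    (s ^ 2) • Eu (2 * n + 1) i i + (r ^ 2) • Eu (2 * n + 1) (i + 1) (i + 1)
      + (s ^ (-2 : ℤ)) • Eu (2 * n + 1) (pB n i) (pB n i)
      + (r ^ (-2 : ℤ)) • Eu (2 * n + 1) (pB n (i + 1)) (pB n (i + 1))
      + (∑ j ∈ (Finset.Icc 1 n).filter (fun j => j ≠ i ∧ j ≠ i + 1),
          (Eu (2 * n + 1) j j + Eu (2 * n + 1) (pB n j) (pB n j)))
      + Eu (2 * n + 1) (n + 1) (n + 1)

lemma sum_mulVec {ι : Type*} {N : ℕ} (S : Finset ι) (M : ι → Matrix (Fin N) (Fin N) K)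
    (v : Fin N → K) : (∑ j ∈ S, M j) *ᵥ v = ∑ j ∈ S, (M j *ᵥ v) := by
  funext x
  simp only [Matrix.mulVec, dotProduct, Finset.sum_apply, Matrix.sum_apply, Finset.sum_mul]
  rw [Finset.sum_comm]

lemma mulVec_sumv {ι m : Type*} [Fintype m] [DecidableEq m] (S : Finset ι)
    (M : Matrix m m K) (v : ι → m → K) :
    M *ᵥ (∑ j ∈ S, v j) = ∑ j ∈ S, (M *ᵥ v j) := by
  funext x
  simp only [Matrix.mulVec, dotProduct, Finset.sum_apply, Finset.mul_sum]
  rw [Finset.sum_comm]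

lemma kron_mulVec {N : ℕ} (A B : Matrix (Fin N) (Fin N) K) (x y : Fin N → K) :
    (A ⊗ₖ B) *ᵥ (fun p => x p.1 * y p.2) = fun p => (A *ᵥ x) p.1 * (B *ᵥ y) p.2 := by
  funext p
  obtain ⟨a, b⟩ := p
  simp only [Matrix.mulVec, dotProduct, kroneckerMap_apply]
  rw [Fintype.sum_prod_type, Finset.sum_mul_sum]
  apply Finset.sum_congr rfl; intro c _
  apply Finset.sum_congr rfl; intro d _
  ring

lemma Eu_mulVec_bv {N a b j : ℕ} (hb1 : 1 ≤ b) (hb2 : b ≤ N) :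
    (Eu N a b : Matrix (Fin N) (Fin N) K) *ᵥ bv N j
      = if b = j then bv N a else 0 := by
  funext x
  simp only [Matrix.mulVec, dotProduct, Eu, bv, Matrix.of_apply]
  rw [Finset.sum_eq_single (⟨b - 1, by omega⟩ : Fin N)]
  · have hb : (b - 1) + 1 = b := by omega
    by_cases hbj : b = j
    · subst hbj
      simp only [hb, and_true, if_pos rfl, if_true]
      split_ifs with h <;> simp [bv, h]
    · have : (b - 1) + 1 ≠ j := by omega
      simp [hb, this, hbj]
  · intro c _ hc
    have : (c : ℕ) + 1 ≠ b := by
      intro h; apply hc; apply Fin.ext; simp; omega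
    split_ifs with h1 h2 <;> simp_all
  · intro h; exact absurd (Finset.mem_univ _) h


lemma eB_mulVec {n i : ℕ} (j : ℕ) (hi1 : 1 ≤ i) (hi2 : i ≤ n) :
    (eB n i : Matrix (Fin (2*n+1)) (Fin (2*n+1)) K) *ᵥ bv (2*n+1) j
      = (if i + 1 = j then bv (2*n+1) i else 0)
        - (if 2*n+2-i = j then bv (2*n+1) (2*n+1-i) else 0) := by
  have h1 : pB n (i+1) = 2*n+1-i := by unfold pB; omega
  have h2 : pB n i = 2*n+2-i := by unfold pB; omega
  rw [eB, h1, h2, Matrix.sub_mulVec,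
      Eu_mulVec_bv (by omega) (by omega), Eu_mulVec_bv (by omega) (by omega)]

/-- ω action for `i < n` on `v_i`. -/
lemma ωB_vi {n i : ℕ} (r s : K) (hi1 : 1 ≤ i) (hin : i < n) :
    (ωB n r s i : Matrix (Fin (2*n+1)) (Fin (2*n+1)) K) *ᵥ bv (2*n+1) i
      = (r ^ 2) • bv (2*n+1) i := by
  rw [ωB, if_neg (by omega)]
  simp only [pB]
  rw [Matrix.add_mulVec, Matrix.add_mulVec, Matrix.add_mulVec, Matrix.add_mulVec,
      Matrix.add_mulVec, smul_mulVec, smul_mulVec, smul_mulVec,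
      smul_mulVec, sum_mulVec]
  rw [Finset.sum_eq_zero (fun j hj => ?side), Eu_mulVec_bv (by omega) (by omega),
      Eu_mulVec_bv (by omega) (by omega), Eu_mulVec_bv (by omega) (by omega),
      Eu_mulVec_bv (by omega) (by omega), Eu_mulVec_bv (by omega) (by omega)]
  · rw [if_pos rfl, if_neg (by omega), if_neg (by omega), if_neg (by omega), if_neg (by omega)]
    simp
  case side =>
    simp only [Finset.mem_filter, Finset.mem_Icc] at hj
    rw [Matrix.add_mulVec, Eu_mulVec_bv (by omega) (by omega),
        Eu_mulVec_bv (by omega) (by omega), if_neg (by omega), if_neg (by omega)]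
    simp

/-- ω action for `i < n` on `v_{(i+1)'} = v_{2n+1-i}`. -/
lemma ωB_vip {n i : ℕ} (r s : K) (hi1 : 1 ≤ i) (hin : i < n) :
    (ωB n r s i : Matrix (Fin (2*n+1)) (Fin (2*n+1)) K) *ᵥ bv (2*n+1) (2*n+1-i)
      = (s ^ (-2 : ℤ)) • bv (2*n+1) (2*n+1-i) := by
  rw [ωB, if_neg (by omega)]
  simp only [pB]
  rw [Matrix.add_mulVec, Matrix.add_mulVec, Matrix.add_mulVec, Matrix.add_mulVec,
      Matrix.add_mulVec, smul_mulVec, smul_mulVec, smul_mulVec,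
      smul_mulVec, sum_mulVec]
  rw [Finset.sum_eq_zero (fun j hj => ?side), Eu_mulVec_bv (by omega) (by omega),
      Eu_mulVec_bv (by omega) (by omega), Eu_mulVec_bv (by omega) (by omega),
      Eu_mulVec_bv (by omega) (by omega), Eu_mulVec_bv (by omega) (by omega)]
  · rw [if_neg (by omega), if_neg (by omega), if_neg (by omega),
        if_pos (by omega), if_neg (by omega)]
    simp
  case side =>
    simp only [Finset.mem_filter, Finset.mem_Icc] at hj
    rw [Matrix.add_mulVec, Eu_mulVec_bv (by omega) (by omega),
        Eu_mulVec_bv (by omega) (by omega), if_neg (by omega), if_neg (by omega)]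
    simp

/-- ω action for `i = n` on `v_n`. -/
lemma ωB_n_vn {n : ℕ} (r s : K) (hn : 1 ≤ n) :
    (ωB n r s n : Matrix (Fin (2*n+1)) (Fin (2*n+1)) K) *ᵥ bv (2*n+1) n
      = (r * s⁻¹) • bv (2*n+1) n := by
  rw [ωB, if_pos rfl]
  simp only [pB]
  rw [Matrix.add_mulVec, Matrix.add_mulVec, Matrix.add_mulVec,
      smul_mulVec, smul_mulVec, sum_mulVec]
  rw [Finset.sum_eq_zero (fun j hj => ?side), Eu_mulVec_bv (by omega) (by omega),
      Eu_mulVec_bv (by omega) (by omega), Eu_mulVec_bv (by omega) (by omega)]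
  · rw [if_pos rfl, if_neg (by omega), if_neg (by omega)]
    simp
  case side =>
    simp only [Finset.mem_Icc] at hj
    rw [Matrix.add_mulVec, smul_mulVec, smul_mulVec,
        Eu_mulVec_bv (by omega) (by omega), Eu_mulVec_bv (by omega) (by omega),
        if_neg (by omega), if_neg (by omega)]
    simp

/-- ω action for `i = n` on `v_{n+1}`. -/
lemma ωB_n_vn1 {n : ℕ} (r s : K) (hn : 1 ≤ n) :
    (ωB n r s n : Matrix (Fin (2*n+1)) (Fin (2*n+1)) K) *ᵥ bv (2*n+1) (n+1)
      = bv (2*n+1) (n+1) := by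
  rw [ωB, if_pos rfl]
  simp only [pB]
  rw [Matrix.add_mulVec, Matrix.add_mulVec, Matrix.add_mulVec,
      smul_mulVec, smul_mulVec, sum_mulVec]
  rw [Finset.sum_eq_zero (fun j hj => ?side), Eu_mulVec_bv (by omega) (by omega),
      Eu_mulVec_bv (by omega) (by omega), Eu_mulVec_bv (by omega) (by omega)]
  · rw [if_neg (by omega), if_pos rfl, if_neg (by omega)]
    simp
  case side =>
    simp only [Finset.mem_Icc] at hj
    rw [Matrix.add_mulVec, smul_mulVec, smul_mulVec,
        Eu_mulVec_bv (by omega) (by omega), Eu_mulVec_bv (by omega) (by omega),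
        if_neg (by omega), if_neg (by omega)]
    simp

lemma D_mulVec_bvv {n : ℕ} (r s : K) (i a b : ℕ) :
    (eB n i ⊗ₖ (1 : Matrix (Fin (2*n+1)) (Fin (2*n+1)) K) + ωB n r s i ⊗ₖ eB n i) *ᵥ
        bvv (2*n+1) a b
    = fun p => ((eB n i : Matrix (Fin (2*n+1)) (Fin (2*n+1)) K) *ᵥ bv (2*n+1) a) p.1
          * bv (2*n+1) b p.2
        + ((ωB n r s i : Matrix (Fin (2*n+1)) (Fin (2*n+1)) K) *ᵥ bv (2*n+1) a) p.1
          * ((eB n i : Matrix (Fin (2*n+1)) (Fin (2*n+1)) K) *ᵥ bv (2*n+1) b) p.2 := by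
  rw [Matrix.add_mulVec,
      show bvv (2*n+1) a b = fun p => bv (2*n+1) a p.1 * bv (2*n+1) b p.2 from rfl,
      kron_mulVec, kron_mulVec, Matrix.one_mulVec]
  rfl

theorem typeB_highest_weight_vectors
    (n : ℕ) (hn : 2 ≤ n) (r s : K) (hr : r ≠ 0) (hs : s ≠ 0) (hrs : r ^ 2 ≠ s ^ 2)
    (i : ℕ) (hi1 : 1 ≤ i) (hi2 : i ≤ n) :
    (eB n i ⊗ₖ (1 : Matrix (Fin (2 * n + 1)) (Fin (2 * n + 1)) K)
        + ωB n r s i ⊗ₖ eB n i).mulVec (bvv (2 * n + 1) 1 1) = 0 ∧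
    (eB n i ⊗ₖ (1 : Matrix (Fin (2 * n + 1)) (Fin (2 * n + 1)) K)
        + ωB n r s i ⊗ₖ eB n i).mulVec
        (bvv (2 * n + 1) 1 2 - (r ^ 2) • bvv (2 * n + 1) 2 1) = 0 ∧
    (eB n i ⊗ₖ (1 : Matrix (Fin (2 * n + 1)) (Fin (2 * n + 1)) K)
        + ωB n r s i ⊗ₖ eB n i).mulVec
        ((∑ k ∈ Finset.Icc 1 n, (r ^ (2 * (k - 1))) • bvv (2 * n + 1) k (pB n k))
          + (r ^ (2 * n - 1) * s⁻¹) • bvv (2 * n + 1) (n + 1) (n + 1)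
          + (∑ k ∈ Finset.Icc 1 n,
              (r ^ (2 * n - 1) * s ^ (2 * (k : ℤ) - 2 * (n : ℤ) - 1)) •
                bvv (2 * n + 1) (pB n k) k)) = 0 := by
  refine ⟨?_, ?_, ?_⟩
  · -- w₁
    rw [D_mulVec_bvv, eB_mulVec _ hi1 hi2, if_neg (by omega), if_neg (by omega)]
    funext p; simp
  · -- w₂
    rw [Matrix.mulVec_sub, Matrix.mulVec_smul, D_mulVec_bvv, D_mulVec_bvv,
        eB_mulVec 1 hi1 hi2, eB_mulVec 2 hi1 hi2,
        if_neg (show ¬(i + 1 = 1) by omega), if_neg (show ¬(2*n+2-i = 1) by omega),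
        if_neg (show ¬(2*n+2-i = 2) by omega)]
    by_cases h1 : i = 1
    · subst h1
      rw [if_pos rfl, ωB_vi r s le_rfl (by omega)]
      funext p; simp [bvv]; ring
    · rw [if_neg (by omega)]
      funext p; simp

  · -- w₃
    by_cases hin : i = n
    · subst hin   -- eliminates n; everything now in terms of i
      have hterm1 : ∀ k ∈ Finset.Icc 1 i,
          (eB i i ⊗ₖ (1 : Matrix (Fin (2*i+1)) (Fin (2*i+1)) K) + ωB i r s i ⊗ₖ eB i i) *ᵥ
              ((r ^ (2 * (k - 1)) : K) • bvv (2*i+1) k (pB i k))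
          = (if k = i then -((r ^ (2*i-1) * s⁻¹) • bvv (2*i+1) i (i+1)) else 0) := by
        intro k hk
        simp only [Finset.mem_Icc] at hk
        rw [Matrix.mulVec_smul, D_mulVec_bvv,
            show pB i k = 2*i+2-k from rfl,
            eB_mulVec _ hi1 hi2, eB_mulVec _ hi1 hi2]
        by_cases h1 : k = i
        · rw [h1]
          rw [if_neg (by omega), if_neg (by omega), if_neg (by omega), if_pos (by omega),
              ωB_n_vn r s (by omega), if_pos rfl,
              show 2*i+1-i = i+1 from by omega,
              show 2*i-1 = 2*(i-1)+1 from by omega, pow_succ]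
          funext p; simp [bvv] <;> ring
        · rw [if_neg (by omega), if_neg (by omega), if_neg (by omega), if_neg (by omega),
              if_neg h1]
          funext p; simp
      have hterm3 : ∀ k ∈ Finset.Icc 1 i,
          (eB i i ⊗ₖ (1 : Matrix (Fin (2*i+1)) (Fin (2*i+1)) K) + ωB i r s i ⊗ₖ eB i i) *ᵥ
              ((r ^ (2*i-1) * s ^ (2*(k:ℤ) - 2*(i:ℤ) - 1)) • bvv (2*i+1) (pB i k) k)
          = (if k = i then -((r ^ (2*i-1) * s⁻¹) • bvv (2*i+1) (i+1) i) else 0) := by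
        intro k hk
        simp only [Finset.mem_Icc] at hk
        rw [Matrix.mulVec_smul, D_mulVec_bvv,
            show pB i k = 2*i+2-k from rfl,
            eB_mulVec _ hi1 hi2, eB_mulVec _ hi1 hi2]
        by_cases h1 : k = i
        · rw [h1]
          rw [if_neg (by omega), if_pos (by omega), if_neg (by omega), if_neg (by omega),
              if_pos rfl, show 2*i+1-i = i+1 from by omega,
              show 2*(i:ℤ) - 2*(i:ℤ) - 1 = -1 from by ring, _root_.zpow_neg_one]
          funext p; simp [bvv] <;> ring
        · rw [if_neg (by omega), if_neg (by omega), if_neg (by omega), if_neg (by omega),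
              if_neg h1]
          funext p; simp
      have hmid : (eB i i ⊗ₖ (1 : Matrix (Fin (2*i+1)) (Fin (2*i+1)) K) + ωB i r s i ⊗ₖ eB i i) *ᵥ
              ((r ^ (2*i-1) * s⁻¹) • bvv (2*i+1) (i+1) (i+1))
          = (r ^ (2*i-1) * s⁻¹) • (bvv (2*i+1) i (i+1) + bvv (2*i+1) (i+1) i) := by
        rw [Matrix.mulVec_smul, D_mulVec_bvv, eB_mulVec _ hi1 hi2,
            if_pos rfl, if_neg (by omega), ωB_n_vn1 r s (by omega)]
        funext p; simp [bvv] <;> ring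
      rw [Matrix.mulVec_add, Matrix.mulVec_add, mulVec_sumv, mulVec_sumv,
          Finset.sum_congr rfl hterm1, Finset.sum_congr rfl hterm3, hmid,
          Finset.sum_ite_eq', Finset.sum_ite_eq',
          if_pos (show i ∈ Finset.Icc 1 i by simp only [Finset.mem_Icc]; omega),
          if_pos (show i ∈ Finset.Icc 1 i by simp only [Finset.mem_Icc]; omega), smul_add]
      abel
    · have hilt : i < n := by omega
      have hterm1 : ∀ k ∈ Finset.Icc 1 n,
          (eB n i ⊗ₖ (1 : Matrix (Fin (2*n+1)) (Fin (2*n+1)) K) + ωB n r s i ⊗ₖ eB n i) *ᵥ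
              ((r ^ (2 * (k - 1)) : K) • bvv (2*n+1) k (pB n k))
          = (if k = i+1 then (r ^ (2*i)) • bvv (2*n+1) i (2*n+1-i) else 0)
            + (if k = i then -((r ^ (2*i)) • bvv (2*n+1) i (2*n+1-i)) else 0) := by
        intro k hk
        simp only [Finset.mem_Icc] at hk
        rw [Matrix.mulVec_smul, D_mulVec_bvv,
            show pB n k = 2*n+2-k from rfl,
            eB_mulVec _ hi1 hi2, eB_mulVec _ hi1 hi2]
        by_cases h1 : k = i + 1
        · rw [h1]
          rw [if_pos rfl, if_neg (by omega), if_neg (by omega), if_neg (by omega),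
              if_pos rfl, if_neg (by omega),
              show 2*((i+1)-1) = 2*i from by omega,
              show 2*n+2-(i+1) = 2*n+1-i from by omega]
          funext p; simp [bvv] <;> ring
        · by_cases h2 : k = i
          · rw [h2]
            rw [if_neg (by omega), if_neg (by omega), if_neg (by omega), if_pos (by omega),
                ωB_vi r s hi1 hilt, if_neg (by omega), if_pos rfl,
                show (2*i) = 2*(i-1)+2 from by omega, pow_add]
            funext p; simp [bvv] <;> ring
          · rw [if_neg (by omega), if_neg (by omega), if_neg (by omega), if_neg (by omega),
                if_neg (by omega), if_neg (by omega)]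
            funext p; simp
      have hterm3 : ∀ k ∈ Finset.Icc 1 n,
          (eB n i ⊗ₖ (1 : Matrix (Fin (2*n+1)) (Fin (2*n+1)) K) + ωB n r s i ⊗ₖ eB n i) *ᵥ
              ((r ^ (2*n-1) * s ^ (2*(k:ℤ) - 2*(n:ℤ) - 1)) • bvv (2*n+1) (pB n k) k)
          = (if k = i then
                -((r ^ (2*n-1) * s ^ (2*(i:ℤ) - 2*(n:ℤ) - 1)) • bvv (2*n+1) (2*n+1-i) i) else 0)
            + (if k = i+1 then
                (r ^ (2*n-1) * s ^ (2*(i:ℤ) - 2*(n:ℤ) - 1)) • bvv (2*n+1) (2*n+1-i) i else 0) := by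
        intro k hk
        simp only [Finset.mem_Icc] at hk
        rw [Matrix.mulVec_smul, D_mulVec_bvv,
            show pB n k = 2*n+2-k from rfl,
            eB_mulVec _ hi1 hi2, eB_mulVec _ hi1 hi2]
        by_cases h1 : k = i
        · rw [h1]
          rw [if_neg (by omega), if_pos (by omega), if_neg (by omega), if_neg (by omega),
              if_pos rfl, if_neg (by omega)]
          funext p; simp [bvv] <;> ring
        · by_cases h2 : k = i + 1
          · rw [h2]
            rw [if_neg (by omega), if_neg (by omega), if_pos rfl, if_neg (by omega),
                show 2*n+2-(i+1) = 2*n+1-i from by omega,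
                ωB_vip r s hi1 hilt, if_neg (by omega), if_pos rfl]
            push_cast
            have hsc : s ^ (2*((i:ℤ)+1) - 2*(n:ℤ) - 1) * s ^ (-2:ℤ)
                = s ^ (2*(i:ℤ) - 2*(n:ℤ) - 1) := by
              rw [← zpow_add₀ hs]; congr 1; ring
            funext p
            simp only [bvv, Pi.smul_apply, Pi.add_apply, Pi.sub_apply, Pi.zero_apply,
              smul_eq_mul, sub_zero, zero_sub, zero_mul, mul_zero, zero_add, add_zero,
              neg_mul, mul_neg]
            linear_combination (r ^ (2*n-1) * bv (2*n+1) (2*n+1-i) p.1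
              * bv (2*n+1) i p.2) * hsc
          · rw [if_neg (by omega), if_neg (by omega), if_neg (by omega), if_neg (by omega),
                if_neg (by omega), if_neg (by omega)]
            funext p; simp
      have hmid : (eB n i ⊗ₖ (1 : Matrix (Fin (2*n+1)) (Fin (2*n+1)) K) + ωB n r s i ⊗ₖ eB n i) *ᵥ
              ((r ^ (2*n-1) * s⁻¹) • bvv (2*n+1) (n+1) (n+1)) = 0 := by
        rw [Matrix.mulVec_smul, D_mulVec_bvv, eB_mulVec _ hi1 hi2,
            if_neg (by omega), if_neg (by omega)]
        funext p; simp
      rw [Matrix.mulVec_add, Matrix.mulVec_add, mulVec_sumv, mulVec_sumv,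
          Finset.sum_congr rfl hterm1, Finset.sum_congr rfl hterm3, hmid,
          Finset.sum_add_distrib, Finset.sum_add_distrib,
          Finset.sum_ite_eq', Finset.sum_ite_eq', Finset.sum_ite_eq', Finset.sum_ite_eq',
          if_pos (show i+1 ∈ Finset.Icc 1 n by simp only [Finset.mem_Icc]; omega),
          if_pos (show i ∈ Finset.Icc 1 n by simp only [Finset.mem_Icc]; omega),
          if_pos (show i ∈ Finset.Icc 1 n by simp only [Finset.mem_Icc]; omega),
          if_pos (show i+1 ∈ Finset.Icc 1 n by simp only [Finset.mem_Icc]; omega)]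
      abel



end TwoParamQG
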